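/- arXiv:1809.02680 — 3 statements merged into one kernel-verified Lean document; each statement's English description precedes it below -/
import Mathlib

section
/- Let (Ω, μ) be a probability space, let n ≥ 1 and ρ > 0 be real numbers, let f, k be real numbers with 0 < f ≤ k, let k' ≤ k be a natural number, and let L be a natural number with L ≥ n^ρ · ln(k/f). Suppose for each j ∈ {1, …, k'} the events A_{j,1}, …, A_{j,L} are independent and satisfy μ(A_{j,i}) ≥ n^{−ρ} for every i. Then the probability that there exists some j for which none of A_{j,1}, …, A_{j,L} occurs is at most f: μ(⋃_{j=1}^{k'} (A_{j,1}ᶜ ∩ ⋯ ∩ A_{j,L}ᶜ)) ≤ f. -/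
open MeasureTheory ProbabilityTheory

/-- With L ≥ n^ρ · ln(k/f) hash tables and k' ≤ k similar rides,
each colliding with the query in each table independently with probability at
least n^(−ρ), the probability that some similar ride collides in none of the
tables is at most f. -/
theorem union_none_occurs_prob_le {Ω : Type*} [MeasurableSpace Ω]
    (μ : Measure Ω) [IsProbabilityMeasure μ]
    (n ρ f k : ℝ) (hn : 1 ≤ n) (hρ : 0 < ρ) (hf : 0 < f) (hfk : f ≤ k)
    (k' : ℕ) (hk' : (k' : ℝ) ≤ k)
    (L : ℕ) (hL : n ^ ρ * Real.log (k / f) ≤ (L : ℝ))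
    (A : Fin k' → Fin L → Set Ω)
    (hA : ∀ j i, MeasurableSet (A j i))
    (hindep : ∀ j, iIndepSet (A j) μ)
    (hge : ∀ j i, ENNReal.ofReal (n ^ (-ρ)) ≤ μ (A j i)) :
    μ (⋃ j, ⋂ i, (A j i)ᶜ) ≤ ENNReal.ofReal f := by
  set p : ℝ := n ^ (-ρ) with hp
  have hk0 : 0 < k := lt_of_lt_of_le hf hfk
  have hp0 : 0 < p := Real.rpow_pos_of_pos (lt_of_lt_of_le one_pos hn) _
  have hp1 : p ≤ 1 := Real.rpow_le_one_of_one_le_of_nonpos hn (le_of_lt (neg_neg_of_pos hρ))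
  have hnpow : (0:ℝ) < n ^ ρ := Real.rpow_pos_of_pos (lt_of_lt_of_le one_pos hn) _
  -- key real inequality: (1-p)^L ≤ f/k
  have hpL : Real.log (k / f) ≤ p * L := by
    have : Real.log (k / f) ≤ (L : ℝ) / n ^ ρ := by
      rw [le_div_iff₀ hnpow]
      linarith [hL]
    calc Real.log (k / f) ≤ (L : ℝ) / n ^ ρ := this
      _ = p * L := by
        rw [hp, Real.rpow_neg (le_trans zero_le_one hn)]
        ring
  have hreal : (1 - p) ^ L ≤ f / k := by
    have h1 : (1 - p) ^ L ≤ Real.exp (-p) ^ L := by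
      apply pow_le_pow_left₀ (by linarith)
      linarith [Real.add_one_le_exp (-p)]
    have h2 : Real.exp (-p) ^ L = Real.exp (-(p * L)) := by
      rw [← Real.exp_nat_mul]; ring_nf
    have h3 : Real.exp (-(p * L)) ≤ f / k := by
      have : Real.exp (-(p * L)) ≤ Real.exp (Real.log (f / k)) := by
        apply Real.exp_le_exp.2
        rw [Real.log_div (ne_of_gt hf) (ne_of_gt hk0)] at *
        rw [Real.log_div (ne_of_gt hk0) (ne_of_gt hf)] at hpL
        linarith
      rwa [Real.exp_log (div_pos hf hk0)] at this
    calc (1 - p) ^ L ≤ Real.exp (-p) ^ L := h1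
      _ = Real.exp (-(p * L)) := h2
      _ ≤ f / k := h3
  -- per-j bound
  have hj : ∀ j, μ (⋂ i, (A j i)ᶜ) ≤ ENNReal.ofReal (f / k) := by
    intro j
    have hmeas : ∀ i, MeasurableSet[MeasurableSpace.generateFrom {A j i}] ((A j i)ᶜ) :=
      fun i => (MeasurableSpace.measurableSet_generateFrom (Set.mem_singleton _)).compl
    have hprod : μ (⋂ i, (A j i)ᶜ) = ∏ i, μ ((A j i)ᶜ) :=
      ProbabilityTheory.iIndep.meas_iInter (hindep j) hmeas
    have hbound : ∀ i, μ ((A j i)ᶜ) ≤ ENNReal.ofReal (1 - p) := by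
      intro i
      rw [prob_compl_eq_one_sub (hA j i)]
      calc (1 : ENNReal) - μ (A j i) ≤ 1 - ENNReal.ofReal p := tsub_le_tsub_left (hge j i) _
        _ = ENNReal.ofReal (1 - p) := by
            rw [← ENNReal.ofReal_one, ← ENNReal.ofReal_sub _ (le_of_lt hp0)]
    calc μ (⋂ i, (A j i)ᶜ) = ∏ i, μ ((A j i)ᶜ) := hprod
      _ ≤ ∏ _i : Fin L, ENNReal.ofReal (1 - p) := Finset.prod_le_prod' fun i _ => hbound i
      _ = ENNReal.ofReal ((1 - p) ^ L) := by
          rw [Finset.prod_const, Finset.card_univ, Fintype.card_fin,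
            ENNReal.ofReal_pow (by linarith)]
      _ ≤ ENNReal.ofReal (f / k) := ENNReal.ofReal_le_ofReal hreal
  calc μ (⋃ j, ⋂ i, (A j i)ᶜ) ≤ ∑ j, μ (⋂ i, (A j i)ᶜ) := measure_iUnion_fintype_le _ _
    _ ≤ ∑ _j : Fin k', ENNReal.ofReal (f / k) := Finset.sum_le_sum fun j _ => hj j
    _ = (k' : ENNReal) * ENNReal.ofReal (f / k) := by
        rw [Finset.sum_const, Finset.card_univ, Fintype.card_fin, nsmul_eq_mul]
    _ ≤ ENNReal.ofReal k * ENNReal.ofReal (f / k) := by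
        gcongr
        rw [← ENNReal.ofReal_natCast]
        exact ENNReal.ofReal_le_ofReal hk'
    _ = ENNReal.ofReal f := by
        rw [← ENNReal.ofReal_mul (le_of_lt hk0), mul_div_cancel₀ _ (ne_of_gt hk0)]
end

section
/- Let d ∈ ℕ, m ≥ 1 a natural number, q, x ∈ ℝ^d with q ≠ 0. Then the cosine similarity of the transformed vectors satisfies ⟨Q(q), P(x)⟩ / (‖Q(q)‖₂ · ‖P(x)‖₂) = ⟨q, x⟩ / (‖q‖₂ · √(m/4 + ‖x‖₂^{2^{m+1}})). -/
open scoped RealInnerProductSpace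

/-- The preprocessing transformation P : ℝ^d → ℝ^{d+m},
P(x) = [x; 1/2 − ‖x‖₂^{2^1}; 1/2 − ‖x‖₂^{2^2}; …; 1/2 − ‖x‖₂^{2^m}]. -/
noncomputable def preprocess (d m : ℕ) (x : EuclideanSpace ℝ (Fin d)) :
    EuclideanSpace ℝ (Fin (d + m)) :=
  WithLp.toLp 2 fun i => if h : (i : ℕ) < d then x ⟨i, h⟩
    else 1 / 2 - ‖x‖ ^ (2 ^ ((i : ℕ) - d + 1))

/-- The query transformation Q : ℝ^d → ℝ^{d+m}, Q(x) = [x; 0; …; 0]. -/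
noncomputable def query (d m : ℕ) (x : EuclideanSpace ℝ (Fin d)) :
    EuclideanSpace ℝ (Fin (d + m)) :=
  WithLp.toLp 2 fun i => if h : (i : ℕ) < d then x ⟨i, h⟩ else 0

lemma inner_qp (d m : ℕ) (q x : EuclideanSpace ℝ (Fin d)) :
    ⟪query d m q, preprocess d m x⟫ = ⟪q, x⟫ := by
  simp only [PiLp.inner_apply, RCLike.inner_apply, starRingEnd_apply, star_trivial]
  rw [Fin.sum_univ_add]
  simp [query, preprocess]

lemma norm_query (d m : ℕ) (q : EuclideanSpace ℝ (Fin d)) :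
    ‖query d m q‖ = ‖q‖ := by
  simp only [EuclideanSpace.norm_eq]
  congr 1
  rw [Fin.sum_univ_add]
  simp [query]

lemma normsq_x (d : ℕ) (x : EuclideanSpace ℝ (Fin d)) :
    ∑ i, ‖x i‖ ^ 2 = ‖x‖ ^ 2 := by
  rw [EuclideanSpace.norm_eq, Real.sq_sqrt]
  positivity

lemma norm_preprocess (d m : ℕ) (x : EuclideanSpace ℝ (Fin d)) :
    ‖preprocess d m x‖ = Real.sqrt ((m : ℝ) / 4 + ‖x‖ ^ (2 ^ (m + 1))) := by
  rw [EuclideanSpace.norm_eq]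
  congr 1
  rw [Fin.sum_univ_add]
  have h1 : ∑ i : Fin d, ‖preprocess d m x (Fin.castAdd m i)‖ ^ 2 = ‖x‖ ^ 2 := by
    rw [← normsq_x d x]
    apply Finset.sum_congr rfl
    intro i _
    simp [preprocess]
  have h2 : ∀ i : Fin m, ‖preprocess d m x (Fin.natAdd d i)‖ ^ 2 =
      1/4 - ‖x‖ ^ (2 ^ ((i:ℕ) + 1)) + ‖x‖ ^ (2 ^ ((i:ℕ) + 2)) := by
    intro i
    have : preprocess d m x (Fin.natAdd d i) = 1 / 2 - ‖x‖ ^ (2 ^ ((i:ℕ) + 1)) := by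
      simp [preprocess]
    rw [this, Real.norm_eq_abs, sq_abs]
    have : (‖x‖ ^ 2 ^ ((i:ℕ) + 1)) ^ 2 = ‖x‖ ^ 2 ^ ((i:ℕ) + 2) := by
      rw [← pow_mul]
      ring_nf
    ring_nf
  rw [h1, Finset.sum_congr rfl (fun i _ => h2 i)]
  rw [Fin.sum_univ_eq_sum_range (fun i => 1/4 - ‖x‖ ^ (2 ^ (i + 1)) + ‖x‖ ^ (2 ^ (i + 2)))]
  have key : ∑ i ∈ Finset.range m, (1/4 - ‖x‖ ^ (2 ^ (i + 1)) + ‖x‖ ^ (2 ^ (i + 2)))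
      = (m:ℝ)/4 + (‖x‖ ^ (2 ^ (m+1)) - ‖x‖ ^ 2) := by
    have tele := Finset.sum_range_sub (fun i => ‖x‖ ^ (2 ^ (i + 1))) m
    rw [Finset.sum_congr rfl (fun i _ => show (1/4 - ‖x‖ ^ (2 ^ (i + 1)) + ‖x‖ ^ (2 ^ (i + 2)) : ℝ)
        = 1/4 + (‖x‖ ^ (2 ^ (i + 1 + 1)) - ‖x‖ ^ (2 ^ (i + 1))) by ring_nf),
      Finset.sum_add_distrib, tele]
    simp
    ring
  rw [key]; ring

/-- for m ≥ 1 and q ≠ 0, the cosine similarity of the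
transformed vectors equals ⟨q, x⟩ / (‖q‖₂ · √(m/4 + ‖x‖₂^{2^{m+1}})). -/
theorem cosine_similarity_transformed (d m : ℕ) (hm : 1 ≤ m)
    (q x : EuclideanSpace ℝ (Fin d)) (hq : q ≠ 0) :
    ⟪query d m q, preprocess d m x⟫ / (‖query d m q‖ * ‖preprocess d m x‖) =
      ⟪q, x⟫ / (‖q‖ * Real.sqrt ((m : ℝ) / 4 + ‖x‖ ^ (2 ^ (m + 1)))) := by
  rw [inner_qp, norm_query, norm_preprocess]
end

section
/- Let d ∈ ℕ, m ≥ 1 a natural number, U ∈ [0,1] and c ∈ (0,1) and s > 0 real numbers, and let q, x, y ∈ ℝ^d with ‖q‖₂ = 1, ‖x‖₂ ≤ U, ‖y‖₂ ≤ U, ⟨q, x⟩ ≥ s and ⟨q, y⟩ ≤ c·s. If c² · U^{2^{m+1}} < (1 − c²) · m/4, then the transformed query strictly prefers x over y in cosine similarity: ⟨Q(q), P(x)⟩ / ‖P(x)‖₂ > ⟨Q(q), P(y)⟩ / ‖P(y)‖₂. -/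
open scoped RealInnerProductSpace

lemma inner_query_preprocess (d m : ℕ) (q v : EuclideanSpace ℝ (Fin d)) :
    ⟪query d m q, preprocess d m v⟫ = ⟪q, v⟫ := by
  simp only [PiLp.inner_apply, RCLike.inner_apply, starRingEnd_apply, star_trivial,
    query, preprocess]
  rw [Fin.sum_univ_add]
  simp [Fin.coe_castAdd, Fin.coe_natAdd, Fin.is_lt]

lemma telescope (m : ℕ) (t : ℝ) :
    ∑ j : Fin m, (1/2 - t ^ (2 ^ ((j : ℕ) + 1))) * (1/2 - t ^ (2 ^ ((j : ℕ) + 1)))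
      = (m : ℝ)/4 + t ^ (2 ^ (m+1)) - t ^ 2 := by
  rw [Fin.sum_univ_eq_sum_range (fun j => (1/2 - t ^ (2 ^ (j + 1))) * (1/2 - t ^ (2 ^ (j + 1))))]
  have key : ∀ j ∈ Finset.range m, (1/2 - t ^ (2 ^ (j + 1))) * (1/2 - t ^ (2 ^ (j + 1)))
      = 1/4 + (t ^ (2 ^ ((j+1) + 1)) - t ^ (2 ^ (j + 1))) := by
    intro j _
    have : t ^ (2 ^ (j + 1)) * t ^ (2 ^ (j + 1)) = t ^ (2 ^ (j + 2)) := by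
      rw [← pow_add]; ring_nf
    nlinarith [this]
  rw [Finset.sum_congr rfl key, Finset.sum_add_distrib,
    Finset.sum_range_sub (fun j => t ^ (2 ^ (j + 1)))]
  simp
  ring

lemma norm_sq_preprocess (d m : ℕ) (v : EuclideanSpace ℝ (Fin d)) :
    ‖preprocess d m v‖ ^ 2 = (m : ℝ) / 4 + ‖v‖ ^ (2 ^ (m + 1)) := by
  rw [← real_inner_self_eq_norm_sq]
  simp only [PiLp.inner_apply, RCLike.inner_apply, starRingEnd_apply, star_trivial, preprocess]
  rw [Fin.sum_univ_add]
  have h1 : ∑ i : Fin d, (if h : ((Fin.castAdd m i : Fin (d+m)) : ℕ) < d then v ⟨_, h⟩ else 1 / 2 - ‖v‖ ^ (2 ^ (((Fin.castAdd m i : Fin (d+m)) : ℕ) - d + 1))) * (if h : ((Fin.castAdd m i : Fin (d+m)) : ℕ) < d then v ⟨_, h⟩ else 1 / 2 - ‖v‖ ^ (2 ^ (((Fin.castAdd m i : Fin (d+m)) : ℕ) - d + 1))) = ‖v‖ ^ 2 := by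
    rw [← real_inner_self_eq_norm_sq]
    simp [PiLp.inner_apply, Fin.is_lt]
    rw [EuclideanSpace.norm_sq_eq]
    exact Finset.sum_congr rfl (fun i _ => by rw [Real.norm_eq_abs, sq_abs, sq])
  rw [h1]
  have h2 : ∀ j : Fin m, (if h : ((Fin.natAdd d j : Fin (d+m)) : ℕ) < d then v ⟨_, h⟩ else 1 / 2 - ‖v‖ ^ (2 ^ (((Fin.natAdd d j : Fin (d+m)) : ℕ) - d + 1))) * (if h : ((Fin.natAdd d j : Fin (d+m)) : ℕ) < d then v ⟨_, h⟩ else 1 / 2 - ‖v‖ ^ (2 ^ (((Fin.natAdd d j : Fin (d+m)) : ℕ) - d + 1)))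
      = (1/2 - ‖v‖ ^ (2 ^ ((j : ℕ) + 1))) * (1/2 - ‖v‖ ^ (2 ^ ((j : ℕ) + 1))) := by
    intro j
    have hnd : ¬ ((Fin.natAdd d j : Fin (d+m)) : ℕ) < d := by simp
    rw [dif_neg hnd]
    simp
  rw [Finset.sum_congr rfl (fun j _ => h2 j), telescope]
  ring

/-- the asymmetric MIPS-to-cosine reduction separates a point x
with ⟨q,x⟩ ≥ s from a point y with ⟨q,y⟩ ≤ c·s provided
c² · U^{2^{m+1}} < (1 − c²) · m/4. -/
theorem mips_to_cosine_separation (d m : ℕ) (hm : 1 ≤ m)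
    (U : ℝ) (hU : U ∈ Set.Icc (0 : ℝ) 1)
    (c : ℝ) (hc : c ∈ Set.Ioo (0 : ℝ) 1) (s : ℝ) (hs : 0 < s)
    (q x y : EuclideanSpace ℝ (Fin d)) (hq : ‖q‖ = 1)
    (hx : ‖x‖ ≤ U) (hy : ‖y‖ ≤ U)
    (hqx : s ≤ ⟪q, x⟫) (hqy : ⟪q, y⟫ ≤ c * s)
    (hsep : c ^ 2 * U ^ (2 ^ (m + 1)) < (1 - c ^ 2) * ((m : ℝ) / 4)) :
    ⟪query d m q, preprocess d m y⟫ / ‖preprocess d m y‖ <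
      ⟪query d m q, preprocess d m x⟫ / ‖preprocess d m x‖ := by
  obtain ⟨hc0, hc1⟩ := hc
  obtain ⟨hU0, hU1⟩ := hU
  set Nx := ‖preprocess d m x‖ with hNxdef
  set Ny := ‖preprocess d m y‖ with hNydef
  have hNx2 : Nx ^ 2 = (m : ℝ) / 4 + ‖x‖ ^ (2 ^ (m + 1)) := norm_sq_preprocess d m x
  have hNy2 : Ny ^ 2 = (m : ℝ) / 4 + ‖y‖ ^ (2 ^ (m + 1)) := norm_sq_preprocess d m y
  have hm4 : (1 : ℝ) / 4 ≤ (m : ℝ) / 4 := by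
    have : (1 : ℝ) ≤ (m : ℝ) := by exact_mod_cast hm
    linarith
  have hxp : ‖x‖ ^ (2 ^ (m + 1)) ≤ U ^ (2 ^ (m + 1)) := pow_le_pow_left₀ (norm_nonneg x) hx _
  have hyp : (0 : ℝ) ≤ ‖y‖ ^ (2 ^ (m + 1)) := pow_nonneg (norm_nonneg y) _
  have hxp0 : (0 : ℝ) ≤ ‖x‖ ^ (2 ^ (m + 1)) := pow_nonneg (norm_nonneg x) _
  have hNx0 : 0 ≤ Nx := norm_nonneg _
  have hNy0 : 0 ≤ Ny := norm_nonneg _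
  have hNxpos : 0 < Nx := by
    rcases hNx0.lt_or_eq with h | h
    · exact h
    · exfalso; rw [← h] at hNx2; simp at hNx2; nlinarith
  have hNypos : 0 < Ny := by
    rcases hNy0.lt_or_eq with h | h
    · exact h
    · exfalso; rw [← h] at hNy2; simp at hNy2; nlinarith
  have hsq : (c * Nx) ^ 2 < Ny ^ 2 := by
    rw [mul_pow, hNx2, hNy2]
    nlinarith [mul_le_mul_of_nonneg_left hxp (sq_nonneg c)]
  have hkey : c * Nx < Ny := lt_of_pow_lt_pow_left₀ 2 hNy0 hsq
  rw [inner_query_preprocess, inner_query_preprocess, div_lt_div_iff₀ hNypos hNxpos]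
  have h1 : ⟪q, y⟫ * Nx ≤ c * s * Nx := mul_le_mul_of_nonneg_right hqy hNx0
  have h2 : c * s * Nx < s * Ny := by
    have := mul_lt_mul_of_pos_left hkey hs
    linarith [this]
  have h3 : s * Ny ≤ ⟪q, x⟫ * Ny := mul_le_mul_of_nonneg_right hqx hNy0
  linarith
end
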